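/- Let K be a field of characteristic ≠ 2, h a positive integer, and k = 2ℓ with 0 ≤ ℓ ≤ h. Then Λᵏ(h × H) ≃ C(h, ℓ) × ⟨(-1)^ℓ⟩ ⊥ (1/2)(C(2h, 2ℓ) - C(h, ℓ)) × H. -/

import Mathlib

open Finset

/-- `B'` is (a model of) the `k`-fold exterior power of the bilinear form `B`:
`W` has dimension `C(dim V, k)` and carries an alternating multilinear wedge map
whose image spans `W` and on which `B'` is given by the determinant pairing
`Λᵏφ(x₁∧...∧x_k, y₁∧...∧y_k) = det(φ(xᵢ, yⱼ))`. -/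
def IsExteriorPower (K : Type*) [Field K] {V W : Type*} [AddCommGroup V] [Module K V]
    [AddCommGroup W] [Module K W] (k : ℕ) (B : LinearMap.BilinForm K V)
    (B' : LinearMap.BilinForm K W) : Prop :=
  Module.finrank K W = (Module.finrank K V).choose k ∧
  ∃ w : AlternatingMap K V W (Fin k),
    Submodule.span K (Set.range fun v : Fin k → V => w v) = ⊤ ∧
    ∀ v u : Fin k → V, B' (w v) (w u) = Matrix.det (Matrix.of fun i j => B (v i) (u j))

section CombPart

namespace ExtAux

variable {h : ℕ}

abbrev P (h : ℕ) := Fin h × Fin 2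

/-- number of "negative" basis vectors in `S` -/
def nneg (S : Finset (P h)) : ℕ := (S.filter fun p => p.2 = 1).card

def Fixed (S : Finset (P h)) : Prop := ∀ i, ((i, 0) ∈ S ↔ (i, 1) ∈ S)

instance : DecidablePred (Fixed (h := h)) := fun _ => by unfold Fixed; infer_instance

def badCols (S : Finset (P h)) : Finset (Fin h) :=
  univ.filter fun i => ¬ ((i, 0) ∈ S ↔ (i, 1) ∈ S)

lemma badCols_nonempty {S : Finset (P h)} (hS : ¬ Fixed S) : (badCols S).Nonempty := by
  rw [Fixed, not_forall] at hS
  obtain ⟨i, hi⟩ := hS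
  exact ⟨i, by simp [badCols, hi]⟩

def flipAt (S : Finset (P h)) (i : Fin h) : Finset (P h) :=
  if (i, 0) ∈ S then insert (i, 1) (S.erase (i, 0)) else insert (i, 0) (S.erase (i, 1))

lemma fin2 (x : Fin 2) : x = 0 ∨ x = 1 := by omega

section flip
variable {S : Finset (P h)} {i : Fin h} (hi : i ∈ badCols S)

include hi

lemma hi' : ¬ ((i, 0) ∈ S ↔ (i, 1) ∈ S) := by simpa [badCols] using hi

lemma mem_flipAt (p : P h) :
    p ∈ flipAt S i ↔ ((p.1 ≠ i ∧ p ∈ S) ∨ (p.1 = i ∧ p ∉ S)) := by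
  have hi2 := hi' hi
  obtain ⟨a, b⟩ := p
  unfold flipAt
  by_cases h0 : (i, 0) ∈ S
  · have h1 : (i,1) ∉ S := by tauto
    simp only [h0, if_true, mem_insert, mem_erase]
    rcases fin2 b with rfl | rfl <;> by_cases hai : a = i <;>
      simp_all [Prod.ext_iff] <;> tauto
  · have h1 : (i,1) ∈ S := by tauto
    simp only [h0, if_false, mem_insert, mem_erase]
    rcases fin2 b with rfl | rfl <;> by_cases hai : a = i <;>
      simp_all [Prod.ext_iff] <;> tauto

lemma card_flipAt : (flipAt S i).card = S.card := by
  have hi2 := hi' hi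
  unfold flipAt
  by_cases h0 : (i, 0) ∈ S
  · have h1 : (i,1) ∉ S := by tauto
    rw [if_pos h0, card_insert_of_notMem (by simp [h1]), card_erase_of_mem h0]
    have := card_pos.2 ⟨_, h0⟩; omega
  · have h1 : (i,1) ∈ S := by tauto
    rw [if_neg h0, card_insert_of_notMem (by simp [h0]), card_erase_of_mem h1]
    have := card_pos.2 ⟨_, h1⟩; omega

lemma nneg_flipAt : nneg (flipAt S i) = nneg S + 1 ∨ nneg S = nneg (flipAt S i) + 1 := by
  have hi2 := hi' hi
  unfold flipAt nneg
  by_cases h0 : (i, 0) ∈ S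
  · have h1 : (i,1) ∉ S := by tauto
    left
    rw [if_pos h0, filter_insert, if_pos rfl, filter_erase,
      card_insert_of_notMem (by simp [h1]), erase_eq_of_notMem (by simp)]
  · have h1 : (i,1) ∈ S := by tauto
    right
    rw [if_neg h0, filter_insert, if_neg (by simp), filter_erase,
      card_erase_of_mem (by simp [h1])]
    have : (i, (1 : Fin 2)) ∈ S.filter fun p => p.2 = 1 := by simp [h1]
    have := card_pos.2 ⟨_, this⟩; omega

lemma badCols_flipAt : badCols (flipAt S i) = badCols S := by
  have hi2 := hi' hi
  ext j
  simp only [badCols, mem_filter, mem_univ, true_and]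
  rw [mem_flipAt hi, mem_flipAt hi]
  by_cases hji : j = i
  · subst hji; simp; tauto
  · simp [hji]

lemma flipAt_flipAt : flipAt (flipAt S i) i = S := by
  have hmem := mem_flipAt hi
  have hi2 : i ∈ badCols (flipAt S i) := by rw [badCols_flipAt hi]; exact hi
  ext p
  rw [mem_flipAt hi2, hmem]
  by_cases hpi : p.1 = i <;> simp [hpi] <;> tauto

end flip

/-- `flip` : total function flipping the least bad column. -/
noncomputable def flip (S : Finset (P h)) : Finset (P h) :=
  if hS : Fixed S then S else flipAt S ((badCols S).min' (badCols_nonempty hS))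

section flipn
variable {S : Finset (P h)} (hS : ¬ Fixed S)
include hS

lemma min'_mem_badCols : (badCols S).min' (badCols_nonempty hS) ∈ badCols S :=
  (badCols S).min'_mem _

lemma flip_def : flip S = flipAt S ((badCols S).min' (badCols_nonempty hS)) := dif_neg hS

lemma card_flip : (flip S).card = S.card := by
  rw [flip_def hS]; exact card_flipAt (min'_mem_badCols hS)

lemma not_fixed_flip : ¬ Fixed (flip S) := by
  rw [flip_def hS]
  intro hfix
  have hb := badCols_flipAt (min'_mem_badCols hS)
  have : (badCols (flipAt S ((badCols S).min' (badCols_nonempty hS)))).Nonempty := by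
    rw [hb]; exact badCols_nonempty hS
  obtain ⟨j, hj⟩ := this
  rw [badCols, mem_filter] at hj
  exact hj.2 (hfix j)

lemma flip_flip : flip (flip S) = S := by
  have h1 := flip_def hS
  have h2 := flip_def (not_fixed_flip hS)
  rw [h2]
  have hmin := min'_mem_badCols hS
  have hb : badCols (flip S) = badCols S := by rw [h1]; exact badCols_flipAt hmin
  have : (badCols (flip S)).min' (badCols_nonempty (not_fixed_flip hS))
      = (badCols S).min' (badCols_nonempty hS) := by congr 1
  rw [this, h1]
  exact flipAt_flipAt hmin

lemma even_nneg_flip : Even (nneg (flip S)) ↔ ¬ Even (nneg S) := by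
  rw [flip_def hS]
  rcases nneg_flipAt (min'_mem_badCols hS) with heq | heq <;>
    rw [heq] <;> simp [Nat.even_add_one]

end flipn

end ExtAux

namespace ExtAux2
open ExtAux

variable {h ℓ : ℕ}

abbrev Idx (h ℓ : ℕ) := {S : Finset (P h) // S.card = 2 * ℓ}
abbrev NF (h ℓ : ℕ) := {S : Idx h ℓ // ¬ Fixed S.1}
abbrev Ev (h ℓ : ℕ) := {S : NF h ℓ // Even (nneg S.1.1)}
abbrev Od (h ℓ : ℕ) := {S : NF h ℓ // ¬ Even (nneg S.1.1)}

lemma card_Idx : Fintype.card (Idx h ℓ) = (2 * h).choose (2 * ℓ) := by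
  rw [Fintype.card_finset_len]
  congr 1
  simp [mul_comm]

lemma fixed_eq_product {S : Finset (P h)} (hS : Fixed S) :
    S = (S.image Prod.fst) ×ˢ univ := by
  ext ⟨a, b⟩
  simp only [mem_product, mem_image, mem_univ, and_true]
  constructor
  · exact fun hab => ⟨(a, b), hab, rfl⟩
  · rintro ⟨⟨a', c⟩, hc, rfl⟩
    have h0 : ((a' , (0 : Fin 2)) ∈ S) ∧ ((a', (1 : Fin 2)) ∈ S) := by
      rcases fin2 c with rfl | rfl
      · exact ⟨hc, (hS a').1 hc⟩
      · exact ⟨(hS a').2 hc, hc⟩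
    rcases fin2 b with rfl | rfl
    · exact h0.1
    · exact h0.2

lemma card_product' (T : Finset (Fin h)) : (T ×ˢ (univ : Finset (Fin 2))).card = 2 * T.card := by
  rw [card_product]
  simp [mul_comm]

lemma fixed_product (T : Finset (Fin h)) : Fixed (T ×ˢ (univ : Finset (Fin 2))) := by
  intro i; simp [mem_product]

lemma image_fst_product (T : Finset (Fin h)) :
    (T ×ˢ (univ : Finset (Fin 2))).image Prod.fst = T := by
  ext a
  constructor
  · intro ha
    obtain ⟨p, hp, rfl⟩ := mem_image.1 ha
    exact (mem_product.1 hp).1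
  · intro ha
    exact mem_image.2 ⟨(a, 0), mem_product.2 ⟨ha, mem_univ _⟩, rfl⟩

lemma nneg_product (T : Finset (Fin h)) : nneg (T ×ˢ (univ : Finset (Fin 2))) = T.card := by
  unfold nneg
  have : (T ×ˢ (univ : Finset (Fin 2))).filter (fun p => p.2 = 1) = T ×ˢ {1} := by
    ext ⟨a, b⟩
    simp only [mem_filter, mem_product, mem_univ, and_true, mem_singleton]
  rw [this, card_product, card_singleton, mul_one]


lemma card_image_fst_of_fixed {S : Idx h ℓ} (hS : Fixed S.1) :
    (S.1.image Prod.fst).card = ℓ := by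
  have h1 := S.2
  rw [fixed_eq_product hS, card_product'] at h1
  omega

lemma nneg_fixed {S : Idx h ℓ} (hS : Fixed S.1) : nneg S.1 = ℓ := by
  conv_lhs => rw [fixed_eq_product hS]
  rw [nneg_product, card_image_fst_of_fixed hS]

noncomputable def fixedEquiv : {S : Idx h ℓ // Fixed S.1} ≃ {T : Finset (Fin h) // T.card = ℓ} where
  toFun S := ⟨S.1.1.image Prod.fst, card_image_fst_of_fixed S.2⟩
  invFun T := ⟨⟨T.1 ×ˢ univ, by rw [card_product', T.2]⟩, fixed_product T.1⟩
  left_inv S := by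
    apply Subtype.ext; apply Subtype.ext
    exact (fixed_eq_product S.2).symm
  right_inv T := by
    apply Subtype.ext
    exact image_fst_product T.1

lemma card_fixed : Fintype.card {S : Idx h ℓ // Fixed S.1} = h.choose ℓ := by
  rw [Fintype.card_congr fixedEquiv, Fintype.card_finset_len, Fintype.card_fin]

noncomputable def flipEquiv : Ev h ℓ ≃ Od h ℓ where
  toFun S := ⟨⟨⟨flip S.1.1.1, by rw [card_flip S.1.2]; exact S.1.1.2⟩, not_fixed_flip S.1.2⟩,
    by rw [even_nneg_flip S.1.2]; exact not_not_intro S.2⟩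
  invFun S := ⟨⟨⟨flip S.1.1.1, by rw [card_flip S.1.2]; exact S.1.1.2⟩, not_fixed_flip S.1.2⟩,
    by rw [even_nneg_flip S.1.2]; exact S.2⟩
  left_inv S := by
    apply Subtype.ext; apply Subtype.ext; apply Subtype.ext
    exact flip_flip S.1.2
  right_inv S := by
    apply Subtype.ext; apply Subtype.ext; apply Subtype.ext
    exact flip_flip S.1.2

lemma card_Ev (hℓ : ℓ ≤ h) :
    Fintype.card (Ev h ℓ) = ((2 * h).choose (2 * ℓ) - h.choose ℓ) / 2 := by
  have h1 : Fintype.card (Ev h ℓ) = Fintype.card (Od h ℓ) := Fintype.card_congr flipEquiv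
  have h2 : Fintype.card (Od h ℓ) =
      Fintype.card (NF h ℓ) - Fintype.card (Ev h ℓ) :=
    Fintype.card_subtype_compl _
  have h3 : Fintype.card (Ev h ℓ) ≤ Fintype.card (NF h ℓ) := Fintype.card_subtype_le _
  have h4 : Fintype.card (NF h ℓ) =
      Fintype.card (Idx h ℓ) - Fintype.card {S : Idx h ℓ // Fixed S.1} :=
    Fintype.card_subtype_compl _
  have h5 : Fintype.card {S : Idx h ℓ // Fixed S.1} ≤ Fintype.card (Idx h ℓ) :=
    Fintype.card_subtype_le _
  rw [card_Idx] at h4 h5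
  rw [card_fixed] at h4 h5
  omega

end ExtAux2


end CombPart

namespace ExtAux2
open ExtAux

def prodFin2 (α : Type*) : α × Fin 2 ≃ α ⊕ α where
  toFun p := if p.2 = 0 then .inl p.1 else .inr p.1
  invFun := Sum.elim (fun a => (a, 0)) (fun a => (a, 1))
  left_inv := by rintro ⟨a, b⟩; rcases fin2 b with rfl | rfl <;> simp
  right_inv s := by rcases s with a | a <;> simp

variable {h ℓ : ℕ}

/-- the product of signs over a finset -/
lemma prod_eps (K : Type*) [Field K] (S : Finset (P h)) :
    (∏ p ∈ S, if p.2 = 0 then (1 : K) else -1) = (-1 : K) ^ nneg S := by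
  rw [← Finset.prod_filter_mul_prod_filter_not S (fun p => p.2 = 0)]
  rw [Finset.prod_eq_one (fun p hp => if_pos (mem_filter.1 hp).2)]
  rw [one_mul, Finset.prod_congr rfl
    (fun p hp => if_neg (mem_filter.1 hp).2), Finset.prod_const]
  congr 1
  unfold nneg
  apply Finset.card_nbij id (fun p hp => ?_) (fun p hp q hq hpq => hpq) (fun p hp => ?_)
  · simp only [mem_coe, mem_filter] at hp ⊢
    refine ⟨hp.1, ?_⟩
    rcases fin2 p.2 with h2 | h2
    · exact absurd h2 hp.2
    · exact h2
  · simp only [Set.mem_image, mem_coe, mem_filter] at hp ⊢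
    refine ⟨p, ⟨hp.1, ?_⟩, rfl⟩
    rw [hp.2]
    decide

end ExtAux2


open ExtAux ExtAux2

/-- Even exterior powers of a hyperbolic form:
`Λ^{2ℓ}(h × ℍ) ≃ C(h,ℓ) × ⟨(-1)^ℓ⟩ ⊥ (1/2)(C(2h,2ℓ) - C(h,ℓ)) × ℍ` for `0 ≤ ℓ ≤ h`. -/
theorem extPower_hyperbolic_even (K : Type*) [Field K] (hchar : ringChar K ≠ 2)
    {V W : Type*} [AddCommGroup V] [Module K V] [AddCommGroup W] [Module K W]
    (h ℓ : ℕ) (hh : 0 < h) (hℓ : ℓ ≤ h)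
    (B : LinearMap.BilinForm K V) (bV : Module.Basis (Fin h × Fin 2) K V)
    (hdiag : ∀ p q, B (bV p) (bV q) =
      if p = q then (if p.2 = 0 then (1 : K) else -1) else 0)
    (B' : LinearMap.BilinForm K W) (hext : IsExteriorPower K (2 * ℓ) B B') :
    QuadraticMap.Equivalent (LinearMap.BilinMap.toQuadraticMap B')
      (QuadraticMap.weightedSumSquares K
        (Sum.elim (fun _ : Fin (h.choose ℓ) => (-1 : K) ^ ℓ)
          (fun p : Fin (((2 * h).choose (2 * ℓ) - h.choose ℓ) / 2) × Fin 2 =>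
            if p.2 = 0 then (1 : K) else -1))) := by

  haveI : Invertible (2 : K) := invertibleOfNonzero (Ring.two_ne_zero hchar)
  obtain ⟨hrank, w, hspan, hdet⟩ := hext
  have hfinV : Module.finrank K V = 2 * h := by
    rw [Module.finrank_eq_card_basis bV, Fintype.card_prod, Fintype.card_fin, Fintype.card_fin,
      mul_comm]
  have hrankW : Module.finrank K W = (2 * h).choose (2 * ℓ) := by rw [hrank, hfinV]
  -- the distinguished tuples
  set tup : Idx h ℓ → Fin (2 * ℓ) → V :=
    fun S i => bV ((S.1.equivFinOfCardEq S.2).symm i : P h) with htup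
  set wB : Idx h ℓ → W := fun S => w (tup S) with hwB
  -- Gram matrix computation
  have hGram : ∀ S T : Idx h ℓ, B' (wB S) (wB T) =
      if S = T then (-1 : K) ^ nneg S.1 else 0 := by
    intro S T
    rw [hwB, hdet]
    by_cases hST : S = T
    · subst hST
      rw [if_pos rfl]
      have hD : (Matrix.of fun i j => B (tup S i) (tup S j)) =
          Matrix.diagonal (fun i =>
            if ((S.1.equivFinOfCardEq S.2).symm i : P h).2 = 0 then (1:K) else -1) := by
        ext i j
        simp only [Matrix.of_apply, Matrix.diagonal_apply, htup]
        rw [hdiag]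
        by_cases hij : i = j
        · subst hij; simp
        · have hne : ((S.1.equivFinOfCardEq S.2).symm i : P h)
              ≠ ((S.1.equivFinOfCardEq S.2).symm j : P h) := by
            intro hc
            exact hij ((S.1.equivFinOfCardEq S.2).symm.injective (Subtype.ext hc))
          rw [if_neg hne, if_neg hij]
      rw [hD, Matrix.det_diagonal]
      have hre : (∏ s : S.1, if (s : P h).2 = 0 then (1:K) else -1) =
          ∏ i : Fin (2 * ℓ), if ((S.1.equivFinOfCardEq S.2).symm i : P h).2 = 0
            then (1:K) else -1 :=
        Fintype.prod_equiv (S.1.equivFinOfCardEq S.2) _ _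
          (fun s => by rw [Equiv.symm_apply_apply])
      rw [← hre, Finset.prod_coe_sort S.1 (fun p => if p.2 = 0 then (1:K) else -1)]
      exact prod_eps K S.1
    · rw [if_neg hST]
      have hnsub : ¬ S.1 ⊆ T.1 := by
        intro hsub
        exact hST (Subtype.ext (Finset.eq_of_subset_of_card_le hsub (by rw [S.2, T.2])))
      obtain ⟨p, hpS, hpT⟩ := Finset.not_subset.1 hnsub
      apply Matrix.det_eq_zero_of_row_eq_zero ((S.1.equivFinOfCardEq S.2) ⟨p, hpS⟩)
      intro j
      simp only [Matrix.of_apply, htup]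
      rw [Equiv.symm_apply_apply]
      have hne2 : ((⟨p, hpS⟩ : S.1) : P h) ≠ ↑((T.1.equivFinOfCardEq T.2).symm j) := by
        intro hc
        apply hpT
        have hmem := ((T.1.equivFinOfCardEq T.2).symm j).2
        rw [← hc] at hmem
        exact hmem
      rw [hdiag, if_neg hne2]
  -- spanning
  have key : ∀ v : Fin (2 * ℓ) → V, w v ∈ Submodule.span K (Set.range wB) := by
    intro v
    have hv : v = fun i => ∑ p : P h, bV.repr (v i) p • bV p :=
      funext fun i => (bV.sum_repr (v i)).symm
    have hrep : w.toMultilinearMap v = ∑ r : Fin (2 * ℓ) → P h,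
        (∏ i, bV.repr (v i) (r i)) • w.toMultilinearMap (fun i => bV (r i)) := by
      conv_lhs => rw [hv]
      rw [MultilinearMap.map_sum]
      exact Finset.sum_congr rfl fun r _ => MultilinearMap.map_smul_univ _ _ _
    show w.toMultilinearMap v ∈ Submodule.span K (Set.range wB)
    rw [hrep]
    apply Submodule.sum_mem
    intro r _
    apply Submodule.smul_mem
    by_cases hr : Function.Injective r
    · have hcard : (Finset.univ.image r).card = 2 * ℓ := by
        rw [Finset.card_image_of_injective _ hr, Finset.card_univ, Fintype.card_fin]
      set Sι : Idx h ℓ := ⟨Finset.univ.image r, hcard⟩ with hSι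
      have hbij : Function.Bijective
          (fun i : Fin (2 * ℓ) => (⟨r i, Finset.mem_image_of_mem r (Finset.mem_univ i)⟩ :
            (Finset.univ.image r : Finset (P h)))) := by
        rw [Fintype.bijective_iff_injective_and_card]
        constructor
        · intro i j hij
          exact hr (congrArg Subtype.val hij)
        · rw [Fintype.card_coe, hcard, Fintype.card_fin]
      set π : Fin (2 * ℓ) ≃ Fin (2 * ℓ) :=
        (Equiv.ofBijective _ hbij).trans (Sι.1.equivFinOfCardEq Sι.2) with hπ
      have htupv : (fun i => bV (r i)) = tup Sι ∘ π := by
        funext i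
        simp only [htup, Function.comp_apply, hπ, Equiv.trans_apply, Equiv.symm_apply_apply,
          Equiv.ofBijective_apply]
      rw [htupv]
      show w (tup Sι ∘ π) ∈ Submodule.span K (Set.range wB)
      rw [w.map_perm (tup Sι) π]
      rcases Int.units_eq_one_or (Equiv.Perm.sign π) with hs | hs <;> rw [hs]
      · rw [one_smul]
        exact Submodule.subset_span ⟨Sι, rfl⟩
      · rw [Units.neg_smul, one_smul]
        exact Submodule.neg_mem _ (Submodule.subset_span ⟨Sι, rfl⟩)
    · show w (fun i => bV (r i)) ∈ Submodule.span K (Set.range wB)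
      have hni : ¬ Function.Injective (fun i => bV (r i)) := fun hinj =>
        hr fun i j hrij => hinj (congrArg bV hrij)
      rw [w.map_eq_zero_of_not_injective (fun i => bV (r i)) hni]
      exact Submodule.zero_mem _
  have hspan2 : ⊤ ≤ Submodule.span K (Set.range wB) := by
    rw [← hspan, Submodule.span_le]
    rintro _ ⟨v, rfl⟩
    rw [SetLike.mem_coe]
    exact key v
  -- the basis
  set bW : Module.Basis (Idx h ℓ) K W :=
    basisOfTopLeSpanOfCardEqFinrank wB hspan2 (by rw [card_Idx, hrankW]) with hbW
  have hbWa : ∀ S, bW S = wB S := fun S => by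
    rw [hbW, coe_basisOfTopLeSpanOfCardEqFinrank]
  -- the index equivalence
  set m := ((2 * h).choose (2 * ℓ) - h.choose ℓ) / 2 with hm
  set eA : Fin (h.choose ℓ) ≃ {S : Idx h ℓ // Fixed S.1} :=
    (Fintype.equivFinOfCardEq card_fixed).symm with heA
  set eM : Fin m ≃ Ev h ℓ := (Fintype.equivFinOfCardEq (card_Ev hℓ)).symm with heM
  set eRight : Fin m × Fin 2 ≃ NF h ℓ :=
    (Equiv.prodCongr eM (Equiv.refl (Fin 2))).trans ((prodFin2 (Ev h ℓ)).trans
      ((Equiv.sumCongr (Equiv.refl (Ev h ℓ)) flipEquiv).trans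
        (Equiv.sumCompl fun S : NF h ℓ => Even (nneg S.1.1)))) with heRight
  set σ : (Fin (h.choose ℓ) ⊕ Fin m × Fin 2) ≃ Idx h ℓ :=
    (Equiv.sumCongr eA eRight).trans (Equiv.sumCompl fun S : Idx h ℓ => Fixed S.1) with hσ
  set bW' := bW.reindex σ.symm with hbW'
  have hbW'a : ∀ idx, bW' idx = wB (σ idx) := fun idx => by
    rw [hbW', Module.Basis.reindex_apply, Equiv.symm_symm, hbWa]
  set Q := LinearMap.BilinMap.toQuadraticMap B' with hQ
  -- weights
  have hW : ∀ idx, Q (bW' idx) =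
      Sum.elim (fun _ : Fin (h.choose ℓ) => (-1 : K) ^ ℓ)
        (fun p : Fin m × Fin 2 => if p.2 = 0 then (1 : K) else -1) idx := by
    intro idx
    rw [hQ, LinearMap.BilinMap.toQuadraticMap_apply, hbW'a, hGram, if_pos rfl]
    rcases idx with i | ⟨i, j⟩
    · have hfix : Fixed (σ (Sum.inl i)).1 := by
        simp only [hσ, Equiv.trans_apply, Equiv.sumCongr_apply, Sum.map_inl,
          Equiv.sumCompl_apply_inl]
        exact (eA i).2
      rw [nneg_fixed hfix]
      simp
    · rcases fin2 j with rfl | rfl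
      · have hev : Even (nneg (σ (Sum.inr (i, 0))).1) := by
          simp only [hσ, heRight, Equiv.trans_apply, Equiv.sumCongr_apply, Sum.map_inr,
            Equiv.sumCompl_apply_inr, Equiv.prodCongr_apply, Equiv.coe_refl, Prod.map_apply,
            id_eq, prodFin2, Equiv.coe_fn_mk, if_pos rfl, Sum.map_inl, Equiv.refl_apply,
            Equiv.sumCompl_apply_inl]
          exact (eM i).2
        rw [hev.neg_one_pow]
        simp
      · have hodd : ¬ Even (nneg (σ (Sum.inr (i, 1))).1) := by
          simp only [hσ, heRight, Equiv.trans_apply, Equiv.sumCongr_apply, Sum.map_inr,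
            Equiv.sumCompl_apply_inr, Equiv.prodCongr_apply, Equiv.coe_refl, Prod.map_apply,
            id_eq, prodFin2, Equiv.coe_fn_mk, Sum.map_inr, Equiv.refl_apply,
            Equiv.sumCompl_apply_inr]
          simp only [if_neg (by decide : ¬ (1 : Fin 2) = 0)]
          exact (flipEquiv (eM i)).2
        rw [(Nat.not_even_iff_odd.1 hodd).neg_one_pow]
        simp
  -- orthogonality
  have hOrtho : (QuadraticMap.associated (R := K) Q).IsOrthoᵢ bW' := by
    intro i j hij
    have hne : σ i ≠ σ j := fun hc => hij (σ.injective hc)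
    show (QuadraticMap.associated (R := K) Q) (bW' i) (bW' j) = 0
    rw [QuadraticMap.associated_apply]
    simp only [hQ, LinearMap.BilinMap.toQuadraticMap_apply, hbW'a, map_add, LinearMap.add_apply]
    rw [hGram (σ i) (σ j), if_neg hne, hGram (σ j) (σ i), if_neg (Ne.symm hne)]
    ring_nf
    simp
  have hEq : Q.basisRepr bW' = QuadraticMap.weightedSumSquares K
      (Sum.elim (fun _ : Fin (h.choose ℓ) => (-1 : K) ^ ℓ)
        (fun p : Fin m × Fin 2 => if p.2 = 0 then (1 : K) else -1)) := by
    rw [QuadraticMap.basisRepr_eq_of_iIsOrtho Q bW' hOrtho]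
    congr 1
    funext idx
    exact hW idx
  have iso := QuadraticMap.isometryEquivBasisRepr Q bW'
  rw [hEq] at iso
  exact ⟨iso⟩
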